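/- Under the coverage assumptions d₁ ≤ κ₁·ρ₁, d₂ ≤ κ₁₂·ρ₁, d₂^S ≤ κ₁₂^S·ρ₁^S and μ(a|s) ≤ κ_{μ|b1}·π_{b1}(a|s) pointwise, and assuming |q₂*(s,a)| ≤ B for all (s,a), the cross-environment source dual l_{1,cross} defined by l_{1,cross} = ((I − γ₁·(P₁^μ)ᵀ)⁻¹ (I − Π_μ)ᵀ (ρ₂ ⊙ l₂*)) / ρ₁ (componentwise quotient), where l₂* = ((I − γ₂·Mᵀ)⁻¹ (ρ₂ ⊙ q₂*)) / ρ₂, satisfies the sup-norm bound |l_{1,cross}(s,a)| ≤ κ₁·(κ₁₂ + κ_{μ|b1}·κ₁₂^S)·B / ((1−γ₁)(1−γ₂)) for all (s,a). -/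

import Mathlib

open Matrix BigOperators

namespace CrossAux

variable {n : Type*} [Fintype n] [DecidableEq n]

lemma entryPowNonneg (N : Matrix n n ℝ) (h0 : ∀ x y, 0 ≤ N x y) :
    ∀ (t : ℕ) (x y : n), 0 ≤ (N ^ t) x y := by
  intro t
  induction t with
  | zero => intro x y; simp only [pow_zero, Matrix.one_apply]; split <;> norm_num
  | succ t ih =>
    intro x y
    rw [pow_succ, Matrix.mul_apply]
    exact Finset.sum_nonneg fun k _ => mul_nonneg (ih x k) (h0 k y)

lemma rowSumPow (N : Matrix n n ℝ) (h1 : ∀ x, ∑ y, N x y = 1) :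
    ∀ (t : ℕ) (x : n), ∑ y, (N ^ t) x y = 1 := by
  intro t
  induction t with
  | zero => intro x; simp [Matrix.one_apply]
  | succ t ih =>
    intro x
    simp only [pow_succ, Matrix.mul_apply]
    rw [Finset.sum_comm]
    calc ∑ k, ∑ y, (N ^ t) x k * N k y = ∑ k, (N ^ t) x k * ∑ y, N k y := by
          simp [Finset.mul_sum]
      _ = 1 := by simp only [h1, mul_one]; exact ih x

lemma entryPowLeOne (N : Matrix n n ℝ) (h0 : ∀ x y, 0 ≤ N x y) (h1 : ∀ x, ∑ y, N x y = 1)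
    (t : ℕ) (x y : n) : (N ^ t) x y ≤ 1 := by
  calc (N ^ t) x y ≤ ∑ z, (N ^ t) x z :=
        Finset.single_le_sum (fun z _ => entryPowNonneg N h0 t x z) (Finset.mem_univ y)
    _ = 1 := rowSumPow N h1 t x

lemma transposePowMulVec (N : Matrix n n ℝ) (t : ℕ) (v : n → ℝ) (x : n) :
    ((Nᵀ ^ t) *ᵥ v) x = ∑ y, (N ^ t) y x * v y := by
  rw [← Matrix.transpose_pow]
  simp [Matrix.mulVec, dotProduct]

lemma summableTerm (N : Matrix n n ℝ) (h0 : ∀ x y, 0 ≤ N x y) (h1 : ∀ x, ∑ y, N x y = 1)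
    (γ : ℝ) (hγ0 : 0 ≤ γ) (hγ1 : γ < 1) (v : n → ℝ) (x : n) :
    Summable fun t : ℕ => γ ^ t * ((Nᵀ ^ t) *ᵥ v) x := by
  apply Summable.of_norm_bounded
    ((summable_geometric_of_lt_one hγ0 hγ1).mul_left (∑ y, |v y|))
  intro t
  rw [Real.norm_eq_abs, abs_mul, abs_pow, abs_of_nonneg hγ0, mul_comm]
  apply mul_le_mul_of_nonneg_right _ (pow_nonneg hγ0 t)
  rw [transposePowMulVec]
  calc |∑ y, (N ^ t) y x * v y| ≤ ∑ y, |(N ^ t) y x * v y| := Finset.abs_sum_le_sum_abs _ _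
    _ ≤ ∑ y, |v y| := by
        apply Finset.sum_le_sum
        intro y _
        rw [abs_mul, abs_of_nonneg (entryPowNonneg N h0 t y x)]
        exact mul_le_of_le_one_left (abs_nonneg _) (entryPowLeOne N h0 h1 t y x)

lemma mulVecAbsLe (N : Matrix n n ℝ) (h0 : ∀ x y, 0 ≤ N x y) (t : ℕ) (v u : n → ℝ)
    (hvu : ∀ y, |v y| ≤ u y) (x : n) :
    |((Nᵀ ^ t) *ᵥ v) x| ≤ ((Nᵀ ^ t) *ᵥ u) x := by
  rw [transposePowMulVec, transposePowMulVec]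
  calc |∑ y, (N ^ t) y x * v y| ≤ ∑ y, |(N ^ t) y x * v y| := Finset.abs_sum_le_sum_abs _ _
    _ ≤ ∑ y, (N ^ t) y x * u y := by
        apply Finset.sum_le_sum
        intro y _
        rw [abs_mul, abs_of_nonneg (entryPowNonneg N h0 t y x)]
        exact mul_le_mul_of_nonneg_left (hvu y) (entryPowNonneg N h0 t y x)

lemma neumann (N : Matrix n n ℝ) (h0 : ∀ x y, 0 ≤ N x y) (h1 : ∀ x, ∑ y, N x y = 1)
    (γ : ℝ) (hγ0 : 0 ≤ γ) (hγ1 : γ < 1) (v : n → ℝ) (x : n) :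
    (((1 : Matrix n n ℝ) - γ • Nᵀ)⁻¹ *ᵥ v) x = ∑' t : ℕ, γ ^ t * ((Nᵀ ^ t) *ᵥ v) x := by
  set A : Matrix n n ℝ := (1 : Matrix n n ℝ) - γ • Nᵀ with hA
  set w : n → ℝ := fun z => ∑' t : ℕ, γ ^ t * ((Nᵀ ^ t) *ᵥ v) z with hw
  have hsum : ∀ z, Summable fun t : ℕ => γ ^ t * ((Nᵀ ^ t) *ᵥ v) z :=
    fun z => summableTerm N h0 h1 γ hγ0 hγ1 v z
  -- A *ᵥ w = v
  have hAw : A *ᵥ w = v := by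
    funext z
    have hNw : (Nᵀ *ᵥ w) z = ∑' t : ℕ, γ ^ t * ((Nᵀ ^ (t + 1)) *ᵥ v) z := by
      have h1' : (Nᵀ *ᵥ w) z = ∑ y, Nᵀ z y * ∑' t : ℕ, γ ^ t * ((Nᵀ ^ t) *ᵥ v) y := by
        simp [Matrix.mulVec, dotProduct, hw]
      rw [h1']
      have h2 : ∀ y, Nᵀ z y * ∑' t : ℕ, γ ^ t * ((Nᵀ ^ t) *ᵥ v) y
          = ∑' t : ℕ, Nᵀ z y * (γ ^ t * ((Nᵀ ^ t) *ᵥ v) y) := fun y => (tsum_mul_left).symm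
      simp_rw [h2]
      rw [← Summable.tsum_finsetSum (fun y _ => (hsum y).mul_left _)]
      congr 1
      funext t
      have : ∑ y, Nᵀ z y * (γ ^ t * ((Nᵀ ^ t) *ᵥ v) y)
          = γ ^ t * ∑ y, Nᵀ z y * ((Nᵀ ^ t) *ᵥ v) y := by
        rw [Finset.mul_sum]; exact Finset.sum_congr rfl fun y _ => by ring
      rw [this]
      congr 1
      have : (Nᵀ *ᵥ ((Nᵀ ^ t) *ᵥ v)) z = ((Nᵀ ^ (t + 1)) *ᵥ v) z := by
        rw [Matrix.mulVec_mulVec, ← pow_succ']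
      rw [← this]
      simp [Matrix.mulVec, dotProduct]
    have hws : w z = v z + ∑' t : ℕ, γ ^ (t + 1) * ((Nᵀ ^ (t + 1)) *ᵥ v) z := by
      show (∑' t : ℕ, γ ^ t * ((Nᵀ ^ t) *ᵥ v) z) = _
      rw [Summable.tsum_eq_zero_add (hsum z)]
      simp
    have : (A *ᵥ w) z = w z - γ * (Nᵀ *ᵥ w) z := by
      rw [hA, Matrix.sub_mulVec, Matrix.one_mulVec, Matrix.smul_mulVec]
      simp
    rw [this, hNw, hws]
    have : γ * ∑' t : ℕ, γ ^ t * ((Nᵀ ^ (t + 1)) *ᵥ v) z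
        = ∑' t : ℕ, γ ^ (t + 1) * ((Nᵀ ^ (t + 1)) *ᵥ v) z := by
      rw [← tsum_mul_left]
      congr 1; funext t; ring
    rw [← this]; ring
  -- A is invertible
  have hdet : IsUnit A.det := by
    rw [isUnit_iff_ne_zero]
    intro hz
    obtain ⟨u, hu0, hAu⟩ := (Matrix.exists_mulVec_eq_zero_iff).2 hz
    have hu : ∀ z, u z = γ * (Nᵀ *ᵥ u) z := by
      intro z
      have := congrFun hAu z
      rw [hA, Matrix.sub_mulVec, Matrix.one_mulVec, Matrix.smul_mulVec] at this
      simp only [Pi.sub_apply, Pi.smul_apply, smul_eq_mul, Pi.zero_apply] at this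
      linarith
    have hS : ∑ z, |u z| ≤ γ * ∑ z, |u z| := by
      calc ∑ z, |u z| = ∑ z, γ * |(Nᵀ *ᵥ u) z| := by
            apply Finset.sum_congr rfl
            intro z _
            rw [hu z, abs_mul, abs_of_nonneg hγ0]
        _ ≤ ∑ z, γ * ∑ y, N y z * |u y| := by
            apply Finset.sum_le_sum
            intro z _
            apply mul_le_mul_of_nonneg_left _ hγ0
            calc |(Nᵀ *ᵥ u) z| = |∑ y, N y z * u y| := by
                  simp [Matrix.mulVec, dotProduct]
              _ ≤ ∑ y, |N y z * u y| := Finset.abs_sum_le_sum_abs _ _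
              _ = ∑ y, N y z * |u y| := by
                  apply Finset.sum_congr rfl
                  intro y _
                  rw [abs_mul, abs_of_nonneg (h0 y z)]
        _ = γ * ∑ y, |u y| := by
            rw [← Finset.mul_sum, Finset.sum_comm]
            congr 1
            apply Finset.sum_congr rfl
            intro y _
            rw [← Finset.sum_mul, h1 y, one_mul]
    have hSpos : 0 < ∑ z, |u z| := by
      obtain ⟨z, hz'⟩ := Function.ne_iff.1 hu0
      have : 0 < |u z| := abs_pos.2 hz'
      have hle : |u z| ≤ ∑ z, |u z| :=
        Finset.single_le_sum (fun y _ => abs_nonneg (u y)) (Finset.mem_univ z)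
      linarith
    nlinarith
  have hfin : A⁻¹ *ᵥ (A *ᵥ w) = w := by
    rw [Matrix.mulVec_mulVec, Matrix.nonsing_inv_mul A hdet, Matrix.one_mulVec]
  calc (A⁻¹ *ᵥ v) x = (A⁻¹ *ᵥ (A *ᵥ w)) x := by rw [hAw]
    _ = w x := by rw [hfin]
    _ = _ := rfl

lemma tsumAbsBound (N : Matrix n n ℝ) (h0 : ∀ x y, 0 ≤ N x y) (h1 : ∀ x, ∑ y, N x y = 1)
    (γ : ℝ) (hγ0 : 0 ≤ γ) (hγ1 : γ < 1) (v u : n → ℝ) (hvu : ∀ y, |v y| ≤ u y) (x : n) :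
    |∑' t : ℕ, γ ^ t * ((Nᵀ ^ t) *ᵥ v) x| ≤ ∑' t : ℕ, γ ^ t * ((Nᵀ ^ t) *ᵥ u) x := by
  have hsv := summableTerm N h0 h1 γ hγ0 hγ1 v x
  have hsu := summableTerm N h0 h1 γ hγ0 hγ1 u x
  have h1' : |∑' t : ℕ, γ ^ t * ((Nᵀ ^ t) *ᵥ v) x| ≤ ∑' t : ℕ, |γ ^ t * ((Nᵀ ^ t) *ᵥ v) x| := by
    exact norm_tsum_le_tsum_norm hsv.norm
  refine h1'.trans (Summable.tsum_le_tsum ?_ hsv.abs hsu)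
  intro t
  rw [abs_mul, abs_pow, abs_of_nonneg hγ0]
  exact mul_le_mul_of_nonneg_left (mulVecAbsLe N h0 t v u hvu x) (pow_nonneg hγ0 t)

end CrossAux
/-- Cross-term dual boundedness (Proposition 'Dual representations and
boundedness'): under the coverage assumptions, the cross-environment source
dual `l_{1,cross} = ((I - γ₁ (P₁^μ)ᵀ)⁻¹ (I - Π_μ)ᵀ (ρ₂ ⊙ l₂*)) / ρ₁` satisfies
`|l_{1,cross}| ≤ κ₁ (κ₁₂ + κ_{μ|b1} κ₁₂^S) B / ((1-γ₁)(1-γ₂))`. -/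
theorem stmt_7 {S A : Type*} [Fintype S] [Fintype A] [Nonempty S] [Nonempty A]
    [DecidableEq S] [DecidableEq A]
    (ρ₁ ρ₂ : S × A → ℝ)
    (hρ₁pos : ∀ x, 0 < ρ₁ x) (hρ₁1 : ∑ x, ρ₁ x = 1)
    (hρ₂pos : ∀ x, 0 < ρ₂ x) (hρ₂1 : ∑ x, ρ₂ x = 1)
    (γ₁ γ₂ : ℝ) (hγ₁0 : 0 ≤ γ₁) (hγ₁1 : γ₁ < 1) (hγ₂0 : 0 ≤ γ₂) (hγ₂1 : γ₂ < 1)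
    (P₁ M : Matrix (S × A) (S × A) ℝ)
    (hP₁0 : ∀ x y, 0 ≤ P₁ x y) (hP₁1 : ∀ x, ∑ y, P₁ x y = 1)
    (hM0 : ∀ x y, 0 ≤ M x y) (hM1 : ∀ x, ∑ y, M x y = 1)
    (μ : S → A → ℝ) (hμ0 : ∀ s a, 0 ≤ μ s a) (hμ1 : ∀ s, ∑ a, μ s a = 1)
    (q₂s : S × A → ℝ) (B : ℝ) (hB : ∀ x, |q₂s x| ≤ B)
    (κ₁ κ₁₂ κ₁₂S κμ : ℝ)
    (d₁ d₂ : S × A → ℝ)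
    (hd₁ : ∀ x, d₁ x = (1 - γ₁) * ∑' t : ℕ, γ₁ ^ t * ((P₁ᵀ ^ t) *ᵥ ρ₁) x)
    (hd₂ : ∀ x, d₂ x = (1 - γ₂) * ∑' t : ℕ, γ₂ ^ t * ((Mᵀ ^ t) *ᵥ ρ₂) x)
    (hcov₁ : ∀ x, d₁ x ≤ κ₁ * ρ₁ x)
    (hcov₁₂ : ∀ x, d₂ x ≤ κ₁₂ * ρ₁ x)
    (hcov₁₂S : ∀ s, (∑ a, d₂ (s, a)) ≤ κ₁₂S * ∑ a, ρ₁ (s, a))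
    (hμcov : ∀ s a, μ s a ≤ κμ * (ρ₁ (s, a) / ∑ a', ρ₁ (s, a')))
    (l₂s lcross : S × A → ℝ)
    (hl₂s : ∀ x, l₂s x =
      (((1 : Matrix (S × A) (S × A) ℝ) - γ₂ • Mᵀ)⁻¹ *ᵥ fun y => ρ₂ y * q₂s y) x / ρ₂ x)
    (hlcross : ∀ x, lcross x =
      (((1 : Matrix (S × A) (S × A) ℝ) - γ₁ • P₁ᵀ)⁻¹ *ᵥ fun y =>
          ρ₂ y * l₂s y - μ y.1 y.2 * ∑ a', ρ₂ (y.1, a') * l₂s (y.1, a')) x / ρ₁ x) :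
    ∀ x, |lcross x| ≤ κ₁ * (κ₁₂ + κμ * κ₁₂S) * B / ((1 - γ₁) * (1 - γ₂)) := by
  intro x
  have hγ₁' : (0:ℝ) < 1 - γ₁ := by linarith
  have hγ₂' : (0:ℝ) < 1 - γ₂ := by linarith
  have hB0 : 0 ≤ B := le_trans (abs_nonneg _) (hB x)
  have hd₂0 : ∀ y, 0 ≤ d₂ y := by
    intro y
    rw [hd₂ y]
    refine mul_nonneg hγ₂'.le (tsum_nonneg fun t => mul_nonneg (pow_nonneg hγ₂0 t) ?_)
    rw [CrossAux.transposePowMulVec]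
    exact Finset.sum_nonneg fun z _ =>
      mul_nonneg (CrossAux.entryPowNonneg M hM0 t z y) (hρ₂pos z).le
  have hκ₁₂0 : 0 ≤ κ₁₂ := by
    have h := (hd₂0 x).trans (hcov₁₂ x)
    have := hρ₁pos x
    nlinarith
  have hρ₁Spos : ∀ s : S, 0 < ∑ a, ρ₁ (s, a) :=
    fun s => Finset.sum_pos (fun a _ => hρ₁pos (s, a)) Finset.univ_nonempty
  have hκ₁₂S0 : 0 ≤ κ₁₂S := by
    have h : (0:ℝ) ≤ κ₁₂S * ∑ a, ρ₁ (x.1, a) :=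
      le_trans (Finset.sum_nonneg fun a _ => hd₂0 (x.1, a)) (hcov₁₂S x.1)
    nlinarith [hρ₁Spos x.1]
  have hκμ0 : 0 ≤ κμ := by
    have h := Finset.sum_le_sum (fun a (_ : a ∈ Finset.univ) => hμcov x.1 a)
    rw [hμ1 x.1] at h
    have h2 : ∑ a, κμ * (ρ₁ (x.1, a) / ∑ a', ρ₁ (x.1, a')) = κμ := by
      rw [← Finset.mul_sum, ← Finset.sum_div, div_self (hρ₁Spos x.1).ne', mul_one]
    rw [h2] at h
    linarith
  have hd₂t : ∀ y, (∑' t : ℕ, γ₂ ^ t * ((Mᵀ ^ t) *ᵥ ρ₂) y) = d₂ y / (1 - γ₂) := by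
    intro y
    rw [hd₂ y, mul_comm, mul_div_assoc, div_self hγ₂'.ne', mul_one]
  have hd₁t : (∑' t : ℕ, γ₁ ^ t * ((P₁ᵀ ^ t) *ᵥ ρ₁) x) = d₁ x / (1 - γ₁) := by
    rw [hd₁ x, mul_comm, mul_div_assoc, div_self hγ₁'.ne', mul_one]
  have hbound₂ : ∀ y, |ρ₂ y * l₂s y| ≤ B / (1 - γ₂) * d₂ y := by
    intro y
    have hρl : ρ₂ y * l₂s y
        = (((1 : Matrix (S × A) (S × A) ℝ) - γ₂ • Mᵀ)⁻¹ *ᵥ fun z => ρ₂ z * q₂s z) y := by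
      rw [hl₂s y, mul_comm, div_mul_cancel₀ _ (hρ₂pos y).ne']
    rw [hρl, CrossAux.neumann M hM0 hM1 γ₂ hγ₂0 hγ₂1 _ y]
    have hb : |∑' t : ℕ, γ₂ ^ t * ((Mᵀ ^ t) *ᵥ fun z => ρ₂ z * q₂s z) y|
        ≤ ∑' t : ℕ, γ₂ ^ t * ((Mᵀ ^ t) *ᵥ fun z => B * ρ₂ z) y := by
      apply CrossAux.tsumAbsBound M hM0 hM1 γ₂ hγ₂0 hγ₂1
      intro z
      rw [abs_mul, abs_of_nonneg (hρ₂pos z).le, mul_comm]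
      exact mul_le_mul_of_nonneg_right (hB z) (hρ₂pos z).le
    refine hb.trans_eq ?_
    have h2 : ∀ t : ℕ, γ₂ ^ t * ((Mᵀ ^ t) *ᵥ fun z => B * ρ₂ z) y
        = B * (γ₂ ^ t * ((Mᵀ ^ t) *ᵥ ρ₂) y) := by
      intro t
      rw [CrossAux.transposePowMulVec, CrossAux.transposePowMulVec]
      simp only [Finset.mul_sum]
      exact Finset.sum_congr rfl fun z _ => by ring
    calc (∑' t : ℕ, γ₂ ^ t * ((Mᵀ ^ t) *ᵥ fun z => B * ρ₂ z) y)
        = ∑' t : ℕ, B * (γ₂ ^ t * ((Mᵀ ^ t) *ᵥ ρ₂) y) := tsum_congr h2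
      _ = B * ∑' t : ℕ, γ₂ ^ t * ((Mᵀ ^ t) *ᵥ ρ₂) y := tsum_mul_left
      _ = B / (1 - γ₂) * d₂ y := by rw [hd₂t y]; ring
  set C : ℝ := B * (κ₁₂ + κμ * κ₁₂S) / (1 - γ₂) with hC
  have hC0 : 0 ≤ C :=
    div_nonneg (mul_nonneg hB0 (add_nonneg hκ₁₂0 (mul_nonneg hκμ0 hκ₁₂S0))) hγ₂'.le
  have hBγ : 0 ≤ B / (1 - γ₂) := div_nonneg hB0 hγ₂'.le
  have hwb : ∀ y : S × A,
      |ρ₂ y * l₂s y - μ y.1 y.2 * ∑ a', ρ₂ (y.1, a') * l₂s (y.1, a')| ≤ C * ρ₁ y := by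
    intro y
    have hμy := hμ0 y.1 y.2
    have hsum' : |∑ a', ρ₂ (y.1, a') * l₂s (y.1, a')| ≤ B / (1 - γ₂) * ∑ a', d₂ (y.1, a') := by
      calc |∑ a', ρ₂ (y.1, a') * l₂s (y.1, a')| ≤ ∑ a', |ρ₂ (y.1, a') * l₂s (y.1, a')| :=
            Finset.abs_sum_le_sum_abs _ _
        _ ≤ ∑ a', B / (1 - γ₂) * d₂ (y.1, a') := Finset.sum_le_sum fun a' _ => hbound₂ (y.1, a')
        _ = B / (1 - γ₂) * ∑ a', d₂ (y.1, a') := by rw [Finset.mul_sum]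
    have h1 : |ρ₂ y * l₂s y| ≤ B / (1 - γ₂) * (κ₁₂ * ρ₁ y) :=
      (hbound₂ y).trans (mul_le_mul_of_nonneg_left (hcov₁₂ y) hBγ)
    have h2 : μ y.1 y.2 * |∑ a', ρ₂ (y.1, a') * l₂s (y.1, a')|
        ≤ B / (1 - γ₂) * (κμ * κ₁₂S * ρ₁ y) := by
      have hD0 : 0 ≤ ∑ a', d₂ (y.1, a') := Finset.sum_nonneg fun a _ => hd₂0 _
      have step2 : μ y.1 y.2 * (∑ a', d₂ (y.1, a'))
          ≤ (κμ * (ρ₁ y / ∑ a', ρ₁ (y.1, a'))) * (κ₁₂S * ∑ a', ρ₁ (y.1, a')) := by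
        apply mul_le_mul (hμcov y.1 y.2) (hcov₁₂S y.1) hD0
        exact le_trans hμy (hμcov y.1 y.2)
      have step3 : (κμ * (ρ₁ y / ∑ a', ρ₁ (y.1, a'))) * (κ₁₂S * ∑ a', ρ₁ (y.1, a'))
          = κμ * κ₁₂S * ρ₁ y := by
        field_simp [(hρ₁Spos y.1).ne']
      calc μ y.1 y.2 * |∑ a', ρ₂ (y.1, a') * l₂s (y.1, a')|
          ≤ μ y.1 y.2 * (B / (1 - γ₂) * ∑ a', d₂ (y.1, a')) :=
            mul_le_mul_of_nonneg_left hsum' hμy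
        _ = B / (1 - γ₂) * (μ y.1 y.2 * ∑ a', d₂ (y.1, a')) := by ring
        _ ≤ B / (1 - γ₂) * (κμ * κ₁₂S * ρ₁ y) :=
            mul_le_mul_of_nonneg_left (step2.trans_eq step3) hBγ
    calc |ρ₂ y * l₂s y - μ y.1 y.2 * ∑ a', ρ₂ (y.1, a') * l₂s (y.1, a')|
        ≤ |ρ₂ y * l₂s y| + |μ y.1 y.2 * ∑ a', ρ₂ (y.1, a') * l₂s (y.1, a')| := abs_sub _ _
      _ = |ρ₂ y * l₂s y| + μ y.1 y.2 * |∑ a', ρ₂ (y.1, a') * l₂s (y.1, a')| := by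
          rw [abs_mul (μ y.1 y.2), abs_of_nonneg hμy]
      _ ≤ B / (1 - γ₂) * (κ₁₂ * ρ₁ y) + B / (1 - γ₂) * (κμ * κ₁₂S * ρ₁ y) := add_le_add h1 h2
      _ = C * ρ₁ y := by rw [hC]; ring
  have hneu₁ := CrossAux.neumann P₁ hP₁0 hP₁1 γ₁ hγ₁0 hγ₁1
    (fun y => ρ₂ y * l₂s y - μ y.1 y.2 * ∑ a', ρ₂ (y.1, a') * l₂s (y.1, a')) x
  rw [hlcross x, hneu₁, abs_div, abs_of_pos (hρ₁pos x), div_le_iff₀ (hρ₁pos x)]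
  have hb1 := CrossAux.tsumAbsBound P₁ hP₁0 hP₁1 γ₁ hγ₁0 hγ₁1
    (fun y => ρ₂ y * l₂s y - μ y.1 y.2 * ∑ a', ρ₂ (y.1, a') * l₂s (y.1, a'))
    (fun y => C * ρ₁ y) hwb x
  refine hb1.trans ?_
  have h2 : ∀ t : ℕ, γ₁ ^ t * ((P₁ᵀ ^ t) *ᵥ fun y => C * ρ₁ y) x
      = C * (γ₁ ^ t * ((P₁ᵀ ^ t) *ᵥ ρ₁) x) := by
    intro t
    rw [CrossAux.transposePowMulVec, CrossAux.transposePowMulVec]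
    simp only [Finset.mul_sum]
    exact Finset.sum_congr rfl fun z _ => by ring
  calc (∑' t : ℕ, γ₁ ^ t * ((P₁ᵀ ^ t) *ᵥ fun y => C * ρ₁ y) x)
      = ∑' t : ℕ, C * (γ₁ ^ t * ((P₁ᵀ ^ t) *ᵥ ρ₁) x) := tsum_congr h2
    _ = C * ∑' t : ℕ, γ₁ ^ t * ((P₁ᵀ ^ t) *ᵥ ρ₁) x := tsum_mul_left
    _ = C * (d₁ x / (1 - γ₁)) := by rw [hd₁t]
    _ ≤ C * (κ₁ * ρ₁ x / (1 - γ₁)) := by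
        apply mul_le_mul_of_nonneg_left _ hC0
        gcongr
        exact hcov₁ x
    _ = κ₁ * (κ₁₂ + κμ * κ₁₂S) * B / ((1 - γ₁) * (1 - γ₂)) * ρ₁ x := by
        rw [hC]; field_simp
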